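/- Let A₁ be an antichain of size q ≤ p in a series-parallel computation DAG with water-mark function W, such that A₁ is not stripped robust. Then there exists a stripped robust antichain A_k ⊆ A₁ (possibly empty) with W(A_k) ≥ W(A₁) − M/2. -/

import Mathlib

/-- Let A₁ be an antichain of size q ≤ p that is not stripped robust. The
empty antichain is stripped robust, and whenever an antichain is not stripped
robust, removing a low-contribution edge or the edges in a low-contribution
non-critical component yields a strictly smaller antichain losing at most
M/(2p) of water mark. Then there is a stripped robust antichain B ⊆ A₁
(possibly empty) with W(B) ≥ W(A₁) − M/2. -/
theorem stmt6 {E : Type*} [DecidableEq E]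
    (M : ℝ) (hM : 0 < M) (p : ℕ) (hp : 0 < p)
    (Antichain StrippedRobust : Finset E → Prop)
    (W : Finset E → ℝ)
    (hEmpty : StrippedRobust ∅)
    (hStep : ∀ A : Finset E, Antichain A → ¬ StrippedRobust A →
      ∃ A', A' ⊂ A ∧ Antichain A' ∧ W A' ≥ W A - M / (2 * p))
    (A₁ : Finset E) (hA : Antichain A₁) (hq : A₁.card ≤ p)
    (hnr : ¬ StrippedRobust A₁) :
    ∃ B ⊆ A₁, Antichain B ∧ StrippedRobust B ∧ W B ≥ W A₁ - M / 2 := by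
  have key : ∀ n : ℕ, ∀ A : Finset E, A.card ≤ n → Antichain A →
      ∃ B ⊆ A, Antichain B ∧ StrippedRobust B ∧
        W B ≥ W A - A.card * (M / (2 * p)) := by
    intro n
    induction n with
    | zero =>
      intro A hcard hAC
      interval_cases h : A.card
      · have : A = ∅ := Finset.card_eq_zero.mp h
        subst this
        exact ⟨∅, le_refl _, hAC, hEmpty, by simp⟩
    | succ n ih =>
      intro A hcard hAC
      by_cases hsr : StrippedRobust A
      · exact ⟨A, le_refl _, hAC, hsr, by
          have : 0 ≤ (A.card : ℝ) * (M / (2 * p)) := by positivity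
          linarith⟩
      · obtain ⟨A', hsub, hAC', hW⟩ := hStep A hAC hsr
        have hc : A'.card ≤ n := by
          have := Finset.card_lt_card hsub
          omega
        obtain ⟨B, hB, hBac, hBsr, hBW⟩ := ih A' hc hAC'
        refine ⟨B, hB.trans hsub.subset, hBac, hBsr, ?_⟩
        have h1 : (A'.card : ℝ) ≤ A.card - 1 := by
          have := Finset.card_lt_card hsub
          have : (A'.card : ℝ) + 1 ≤ A.card := by exact_mod_cast this
          linarith
        have hpos : 0 ≤ M / (2 * p) := by positivity
        nlinarith [mul_le_mul_of_nonneg_right h1 hpos]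
  obtain ⟨B, hB, hBac, hBsr, hBW⟩ := key A₁.card A₁ le_rfl hA
  refine ⟨B, hB, hBac, hBsr, ?_⟩
  have hqp : (A₁.card : ℝ) ≤ p := by exact_mod_cast hq
  have hp' : (0:ℝ) < p := by exact_mod_cast hp
  have h2 : (A₁.card : ℝ) * (M / (2 * p)) ≤ (p:ℝ) * (M / (2 * p)) :=
    mul_le_mul_of_nonneg_right hqp (by positivity)
  have h3 : (p:ℝ) * (M / (2 * p)) = M / 2 := by field_simp
  linarith
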